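/- Let (X,d) be a Heine–Borel metric space, p ≥ 1, μ ∈ P_p(X), k ∈ ℕ, and R ⊆ X a nonempty closed set. Then the set C_p(μ,k,R) of optimal cluster center sets is nonempty; i.e., there exists a set S ⊆ R with 1 ≤ #S ≤ k achieving inf{∫ min_{x∈S'} d(x,y)^p dμ(y) : S' ⊆ R, 1 ≤ #S' ≤ k}. -/

import Mathlib

open Filter MeasureTheory Topology TopologicalSpace Metric Set

noncomputable section

/-- Kuratowski lower limit of a sequence of sets. -/
def KurLi {Y : Type*} [TopologicalSpace Y] (A : ℕ → Set Y) : Set Y :=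
  {x | ∀ U ∈ nhds x, ∀ᶠ n in atTop, (U ∩ A n).Nonempty}

/-- Kuratowski upper limit of a sequence of sets. -/
def KurLs {Y : Type*} [TopologicalSpace Y] (A : ℕ → Set Y) : Set Y :=
  {x | ∀ U ∈ nhds x, ∃ᶠ n in atTop, (U ∩ A n).Nonempty}

variable {X : Type*} [MetricSpace X] [MeasurableSpace X]

/-- The clustering cost `W_p(S,μ) = ∫ d(y,S)^p dμ(y)`. -/
def Wp (p : ℝ) (S : Set X) (μ : Measure X) : ℝ :=
  ∫ y, infDist y S ^ p ∂μ

/-- `μ` has a finite `p`-th moment. -/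
def FinMom (p : ℝ) (μ : Measure X) : Prop :=
  ∃ x : X, Integrable (fun y => dist x y ^ p) μ

/-- Convergence in the `p`-Wasserstein topology: weak convergence together with
convergence of the `p`-th moments about some point. -/
def WassTendsto (p : ℝ) (μ : ℕ → Measure X) (ν : Measure X) : Prop :=
  (∀ f : BoundedContinuousFunction X ℝ,
      Tendsto (fun n => ∫ y, f y ∂ μ n) atTop (𝓝 (∫ y, f y ∂ ν))) ∧
  ∃ x : X, Tendsto (fun n => ∫ y, dist x y ^ p ∂ μ n) atTop (𝓝 (∫ y, dist x y ^ p ∂ ν))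

/-- `S` is a feasible set of cluster centers: a nonempty finite subset of `R`
with at most `k` points. -/
def Feas (k : ℕ) (R S : Set X) : Prop :=
  S ⊆ R ∧ S.Finite ∧ S.Nonempty ∧ S.ncard ≤ k

/-- The optimal clustering cost `m_{k,p}(μ,R)`. -/
def mCost (p : ℝ) (μ : Measure X) (k : ℕ) (R : Set X) : ℝ :=
  sInf ((fun S => Wp p S μ) '' {S | Feas k R S})

/-- The set of optimal cluster-center sets `C_p(μ,k,R)`, viewed as a subset of the
hyperspace of nonempty compact subsets of `X` with the Hausdorff metric. -/
def Cp (p : ℝ) (μ : Measure X) (k : ℕ) (R : Set X) : Set (NonemptyCompacts X) :=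
  {S | Feas k R (S : Set X) ∧ ∀ T : Set X, Feas k R T → Wp p (S : Set X) μ ≤ Wp p T μ}

/-- The support of a measure on a metric space. -/
def measSupp (μ : Measure X) : Set X :=
  {x | ∀ r : ℝ, 0 < r → μ (Metric.ball x r) ≠ 0}

open scoped ENNReal

section AuxLemmas
variable {X : Type*} [MetricSpace X]

lemma le_infDist' {s : Set X} {x : X} {c : ℝ} (hs : s.Nonempty)
    (h : ∀ y ∈ s, c ≤ dist x y) : c ≤ infDist x s := by
  by_contra hc
  push_neg at hc
  obtain ⟨y, hy, hlt⟩ := (infDist_lt_iff hs).1 hc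
  exact absurd (h y hy) (not_le.2 hlt)

lemma rpow_add_le {p a b : ℝ} (hp : 0 ≤ p) (ha : 0 ≤ a) (hb : 0 ≤ b) :
    (a + b) ^ p ≤ 2 ^ p * (a ^ p + b ^ p) := by
  have h1 : a + b ≤ 2 * max a b := by
    rcases le_total a b with h | h
    · rw [max_eq_right h]; linarith
    · rw [max_eq_left h]; linarith
  calc (a + b) ^ p ≤ (2 * max a b) ^ p :=
        Real.rpow_le_rpow (by positivity) h1 hp
    _ = 2 ^ p * (max a b) ^ p := Real.mul_rpow (by norm_num) (le_max_of_le_left ha)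
    _ ≤ 2 ^ p * (a ^ p + b ^ p) := by
        have hmax : (max a b) ^ p ≤ a ^ p + b ^ p := by
          rcases le_total a b with h | h
          · rw [max_eq_right h]; exact le_add_of_nonneg_left (Real.rpow_nonneg ha p)
          · rw [max_eq_left h]; exact le_add_of_nonneg_right (Real.rpow_nonneg hb p)
        exact mul_le_mul_of_nonneg_left hmax (Real.rpow_nonneg (by norm_num) p)

lemma exists_subseq_tendsto_or_escape [ProperSpace X] (x0 : X) (u : ℕ → X) :
    ∃ φ : ℕ → ℕ, StrictMono φ ∧
      ((∃ x, Tendsto (fun n => u (φ n)) atTop (𝓝 x)) ∨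
        Tendsto (fun n => dist x0 (u (φ n))) atTop atTop) := by
  by_cases h : ∃ C, {n | dist x0 (u n) ≤ C}.Infinite
  · obtain ⟨C, hC⟩ := h
    have hfreq : ∃ᶠ n in atTop, dist x0 (u n) ≤ C :=
      Nat.frequently_atTop_iff_infinite.2 hC
    obtain ⟨ψ, hψ, hmem⟩ := extraction_of_frequently_atTop hfreq
    have hball : ∀ n, u (ψ n) ∈ closedBall x0 C := fun n => by
      rw [mem_closedBall, dist_comm]; exact hmem n
    obtain ⟨x, -, χ, hχ, hlim⟩ := (isCompact_closedBall x0 C).tendsto_subseq hball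
    exact ⟨ψ ∘ χ, hψ.comp hχ, Or.inl ⟨x, hlim⟩⟩
  · push_neg at h
    refine ⟨id, strictMono_id, Or.inr ?_⟩
    rw [Filter.tendsto_atTop]
    intro b
    have hf : {n | dist x0 (u n) ≤ b}.Finite := h b
    have := hf.eventually_cofinite_notMem
    rw [Nat.cofinite_eq_atTop] at this
    exact this.mono fun n hn => le_of_not_ge hn

lemma exists_subseq_forall [ProperSpace X] (x0 : X) {k : ℕ} (g : ℕ → Fin k → X)
    (s : Finset (Fin k)) :
    ∃ φ : ℕ → ℕ, StrictMono φ ∧ ∀ i ∈ s,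
      (∃ x, Tendsto (fun n => g (φ n) i) atTop (𝓝 x)) ∨
        Tendsto (fun n => dist x0 (g (φ n) i)) atTop atTop := by
  classical
  induction s using Finset.induction with
  | empty => exact ⟨id, strictMono_id, by simp⟩
  | insert a s hi ih =>
    obtain ⟨φ, hφ, hall⟩ := ih
    obtain ⟨ψ, hψ, hcase⟩ := exists_subseq_tendsto_or_escape x0 (fun n => g (φ n) a)
    refine ⟨φ ∘ ψ, hφ.comp hψ, ?_⟩
    intro j hj
    rcases Finset.mem_insert.1 hj with rfl | hj
    · exact hcase
    · rcases hall j hj with ⟨x, hx⟩ | hx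
      · exact Or.inl ⟨x, hx.comp hψ.tendsto_atTop⟩
      · exact Or.inr (hx.comp hψ.tendsto_atTop)

lemma exists_range_eq {k : ℕ} (hk : 1 ≤ k) {T : Set X} (hfin : T.Finite)
    (hne : T.Nonempty) (hcard : T.ncard ≤ k) : ∃ f : Fin k → X, Set.range f = T := by
  classical
  set F := hfin.toFinset with hF
  have hmemF : ∀ x, x ∈ F ↔ x ∈ T := fun x => hfin.mem_toFinset
  have hFcard : F.card ≤ k := by
    rw [← Set.ncard_eq_toFinset_card T hfin]; exact hcard
  have hpos : 0 < F.card := Finset.card_pos.2 (by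
    obtain ⟨x, hx⟩ := hne; exact ⟨x, (hmemF x).2 hx⟩)
  let e := F.equivFin
  refine ⟨fun i => (e.symm ⟨min i (F.card - 1), by omega⟩ : X), ?_⟩
  ext x
  constructor
  · rintro ⟨i, rfl⟩
    exact (hmemF _).1 (e.symm _).2
  · intro hx
    have hxF : x ∈ F := (hmemF x).2 hx
    refine ⟨⟨e ⟨x, hxF⟩, lt_of_lt_of_le (e ⟨x, hxF⟩).2 hFcard⟩, ?_⟩
    have hmin : min ((e ⟨x, hxF⟩ : Fin F.card) : ℕ) (F.card - 1) = (e ⟨x, hxF⟩ : Fin F.card) := by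
      have := (e ⟨x, hxF⟩).2; omega
    simp only [hmin]
    have : (⟨((e ⟨x, hxF⟩ : Fin F.card) : ℕ), by omega⟩ : Fin F.card) = e ⟨x, hxF⟩ := by
      apply Fin.ext; rfl
    rw [this, Equiv.symm_apply_apply]


section Int
variable {X : Type*} [MetricSpace X] [MeasurableSpace X] [BorelSpace X]
  {p : ℝ} (μ : Measure X) [IsFiniteMeasure μ]

lemma integrable_dist_rpow (hp : 0 ≤ p) (hμ : FinMom p μ) (x : X) :
    Integrable (fun y => dist x y ^ p) μ := by
  obtain ⟨z, hz⟩ := hμ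
  have hcont : Continuous fun y : X => dist x y ^ p :=
    (continuous_const.dist continuous_id).rpow_const (fun y => Or.inr hp)
  refine Integrable.mono' (((integrable_const ((dist x z) ^ p)).add hz).const_mul (2 ^ p))
    hcont.aestronglyMeasurable (Eventually.of_forall fun y => ?_)
  rw [Real.norm_eq_abs, abs_of_nonneg (Real.rpow_nonneg dist_nonneg p)]
  calc dist x y ^ p ≤ (dist x z + dist z y) ^ p :=
        Real.rpow_le_rpow dist_nonneg (dist_triangle x z y) hp
    _ ≤ 2 ^ p * (dist x z ^ p + dist z y ^ p) := rpow_add_le hp dist_nonneg dist_nonneg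

lemma integrable_infDist_rpow (hp : 0 ≤ p) (hμ : FinMom p μ) {S : Set X} (hS : S.Nonempty) :
    Integrable (fun y => infDist y S ^ p) μ := by
  obtain ⟨s0, hs0⟩ := hS
  refine (integrable_dist_rpow (p := p) μ hp hμ s0).mono'
    (((continuous_infDist_pt S).rpow_const (fun y => Or.inr hp)).aestronglyMeasurable)
    (Eventually.of_forall fun y => ?_)
  rw [Real.norm_eq_abs, abs_of_nonneg (Real.rpow_nonneg infDist_nonneg p)]
  refine Real.rpow_le_rpow infDist_nonneg ?_ hp
  rw [dist_comm]
  exact infDist_le_dist_of_mem hs0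

lemma wp_nonneg (S : Set X) : 0 ≤ Wp p S μ :=
  integral_nonneg fun y => Real.rpow_nonneg infDist_nonneg p

end Int
end AuxLemmas

/-- In a Heine–Borel (proper) space, for `μ ∈ P_p(X)`, `k ≥ 1` and `R` nonempty closed,
the set of optimal cluster-center sets `C_p(μ,k,R)` is nonempty. -/
theorem stmt10 {X : Type*} [MetricSpace X] [ProperSpace X] [MeasurableSpace X] [BorelSpace X]
    (p : ℝ) (hp : 1 ≤ p) (μ : Measure X) [IsProbabilityMeasure μ] (hμ : FinMom p μ)
    (k : ℕ) (hk : 1 ≤ k) (R : Set X) (hRc : IsClosed R) (hRne : R.Nonempty) :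
    (Cp p μ k R).Nonempty := by
  classical
  obtain ⟨x0, hx0⟩ := hRne
  have hp0 : (0:ℝ) ≤ p := le_trans zero_le_one hp
  have hppos : (0:ℝ) < p := lt_of_lt_of_le zero_lt_one hp
  have hkne : Nonempty (Fin k) := ⟨⟨0, hk⟩⟩
  set vals : Set ℝ := (fun S => Wp p S μ) '' {S : Set X | Feas k R S} with hvals
  set m : ℝ := sInf vals with hm
  have hfeas0 : Feas k R ({x0} : Set X) :=
    ⟨singleton_subset_iff.2 hx0, finite_singleton x0, ⟨x0, rfl⟩, by
      rw [Set.ncard_singleton]; exact hk⟩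
  have hvne : vals.Nonempty := ⟨Wp p {x0} μ, ⟨{x0}, hfeas0, rfl⟩⟩
  have hbdd : BddBelow vals := ⟨0, by rintro v ⟨S, hS, rfl⟩; exact wp_nonneg μ S⟩
  have hm0 : 0 ≤ m := le_csInf hvne (by rintro v ⟨S, hS, rfl⟩; exact wp_nonneg μ S)
  have hm_le : ∀ T : Set X, Feas k R T → m ≤ Wp p T μ :=
    fun T hT => csInf_le hbdd ⟨T, hT, rfl⟩
  -- minimizing sequence of tuples
  have hseq : ∀ n : ℕ, ∃ f : Fin k → X,
      Feas k R (Set.range f) ∧ Wp p (Set.range f) μ < m + 1 / (n + 1) := by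
    intro n
    have hε : (0:ℝ) < 1 / (n + 1) := by positivity
    have : ∃ v ∈ vals, v < m + 1 / (n + 1) := by
      have := (csInf_lt_iff hbdd hvne).1 (by linarith : sInf vals < m + 1 / (n+1))
      exact this
    obtain ⟨v, ⟨T, hT, rfl⟩, hv⟩ := this
    obtain ⟨f, hf⟩ := exists_range_eq hk hT.2.1 hT.2.2.1 hT.2.2.2
    exact ⟨f, by rw [hf]; exact hT, by rw [hf]; exact hv⟩
  choose g hgfeas hglt using hseq
  -- extract subsequence
  obtain ⟨φ, hφ, hdich⟩ := exists_subseq_forall x0 g Finset.univ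
  set I : Finset (Fin k) :=
    Finset.univ.filter (fun i => ∃ x, Tendsto (fun n => g (φ n) i) atTop (𝓝 x)) with hI
  set s : Fin k → X := fun i =>
    if h : ∃ x, Tendsto (fun n => g (φ n) i) atTop (𝓝 x) then h.choose else x0 with hsdef
  have hs : ∀ i ∈ I, Tendsto (fun n => g (φ n) i) atTop (𝓝 (s i)) := by
    intro i hi
    rw [hI, Finset.mem_filter] at hi
    rw [hsdef]
    simp only [dif_pos hi.2]
    exact hi.2.choose_spec
  have hesc : ∀ i ∉ I, Tendsto (fun n => dist x0 (g (φ n) i)) atTop atTop := by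
    intro i hi
    rw [hI, Finset.mem_filter] at hi
    rcases hdich i (Finset.mem_univ i) with h | h
    · exact absurd ⟨Finset.mem_univ i, h⟩ hi
    · exact h
  -- notation for subsequence sets
  set Sn : ℕ → Set X := fun n => Set.range (g (φ n)) with hSn
  have hSnne : ∀ n, (Sn n).Nonempty := fun n => Set.range_nonempty _
  have hWlt : ∀ n, Wp p (Sn n) μ < m + 1 / (n + 1) := by
    intro n
    refine lt_of_lt_of_le (hglt (φ n)) ?_
    have h1 : n ≤ φ n := hφ.le_apply
    have : (n:ℝ) + 1 ≤ (φ n : ℝ) + 1 := by exact_mod_cast Nat.add_le_add_right h1 1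
    gcongr
  -- lintegral facts
  set Φ : ℕ → X → ℝ≥0∞ := fun n y => ENNReal.ofReal (infDist y (Sn n) ^ p) with hΦ
  have hΦmeas : ∀ n, Measurable (Φ n) := by
    intro n
    exact ENNReal.measurable_ofReal.comp
      (((continuous_infDist_pt (Sn n)).rpow_const (fun y => Or.inr hp0)).measurable)
  have hΦint : ∀ n, ∫⁻ y, Φ n y ∂μ = ENNReal.ofReal (Wp p (Sn n) μ) := by
    intro n
    rw [hΦ]
    exact (ofReal_integral_eq_lintegral_ofReal
      (integrable_infDist_rpow μ hp0 hμ (hSnne n))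
      (Eventually.of_forall fun y => Real.rpow_nonneg infDist_nonneg p)).symm
  have hΦbd : ∀ n, ∫⁻ y, Φ n y ∂μ ≤ ENNReal.ofReal (m + 1 / (n + 1)) := by
    intro n
    rw [hΦint n]
    exact ENNReal.ofReal_le_ofReal (le_of_lt (hWlt n))
  have hlim_bound : Filter.liminf (fun n => ∫⁻ y, Φ n y ∂μ) atTop ≤ ENNReal.ofReal m := by
    have h1 : Tendsto (fun n : ℕ => ENNReal.ofReal (m + 1 / (n + 1))) atTop
        (𝓝 (ENNReal.ofReal m)) := by
      have : Tendsto (fun n : ℕ => m + 1 / ((n:ℝ) + 1)) atTop (𝓝 (m + 0)) :=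
        tendsto_const_nhds.add tendsto_one_div_add_atTop_nhds_zero_nat
      rw [add_zero] at this
      exact (ENNReal.continuous_ofReal.continuousAt).tendsto.comp this
    calc Filter.liminf (fun n => ∫⁻ y, Φ n y ∂μ) atTop
        ≤ Filter.liminf (fun n : ℕ => ENNReal.ofReal (m + 1 / (n + 1))) atTop :=
          Filter.liminf_le_liminf (Eventually.of_forall hΦbd)
      _ = ENNReal.ofReal m := h1.liminf_eq
  -- Case: all coordinates escape -> contradiction
  have hInem : I.Nonempty := by
    by_contra hIe
    rw [Finset.not_nonempty_iff_eq_empty] at hIe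
    have hall : ∀ i : Fin k, Tendsto (fun n => dist x0 (g (φ n) i)) atTop atTop := by
      intro i; exact hesc i (by rw [hIe]; exact Finset.notMem_empty i)
    have hpt : ∀ y : X, Tendsto (fun n => Φ n y) atTop (𝓝 ⊤) := by
      intro y
      have hd : Tendsto (fun n => infDist y (Sn n)) atTop atTop := by
        rw [Filter.tendsto_atTop]
        intro b
        have : ∀ᶠ n in atTop, ∀ i : Fin k, b + dist x0 y ≤ dist x0 (g (φ n) i) :=
          eventually_all.2 fun i => (hall i).eventually_ge_atTop (b + dist x0 y)
        refine this.mono fun n hn => ?_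
        refine le_infDist' (hSnne n) ?_
        rintro z ⟨i, rfl⟩
        have h1 := hn i
        have h2 := dist_triangle x0 y (g (φ n) i)
        linarith [dist_comm y (g (φ n) i) ▸ h2]
      have h2 : Tendsto (fun n => infDist y (Sn n) ^ p) atTop atTop :=
        (tendsto_rpow_atTop hppos).comp hd
      exact ENNReal.tendsto_ofReal_atTop.comp h2
    have htop : ∫⁻ y, Filter.liminf (fun n => Φ n y) atTop ∂μ = ⊤ := by
      have : ∀ y : X, Filter.liminf (fun n => Φ n y) atTop = ⊤ :=
        fun y => (hpt y).liminf_eq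
      simp only [this]
      simp [lintegral_const, measure_univ]
    have hle := lintegral_liminf_le hΦmeas (μ := μ) (u := atTop)
    rw [htop] at hle
    have := le_trans hle hlim_bound
    exact absurd this (by simp [ENNReal.ofReal_lt_top.ne])
  -- the limit set
  obtain ⟨i0, hi0⟩ := hInem
  set Sstar : Set X := ↑(I.image s) with hSstar
  have hSstar_fin : Sstar.Finite := (I.image s).finite_toSet
  have hSstar_ne : Sstar.Nonempty := ⟨s i0, by
    rw [hSstar]; exact_mod_cast Finset.mem_image_of_mem s hi0⟩
  have hSstar_sub : Sstar ⊆ R := by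
    rintro z hz
    rw [hSstar] at hz
    obtain ⟨i, hi, rfl⟩ := Finset.mem_image.1 (by exact_mod_cast hz)
    refine hRc.mem_of_tendsto (hs i hi) (Eventually.of_forall fun n => ?_)
    exact (hgfeas (φ n)).1 ⟨i, rfl⟩
  have hSstar_card : Sstar.ncard ≤ k := by
    rw [hSstar, Set.ncard_coe_finset]
    calc (I.image s).card ≤ I.card := Finset.card_image_le
      _ ≤ Finset.univ.card := Finset.card_le_univ I
      _ = k := by simp
  have hSstar_feas : Feas k R Sstar := ⟨hSstar_sub, hSstar_fin, hSstar_ne, hSstar_card⟩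
  -- pointwise convergence of infDist
  have hptlim : ∀ y : X, Tendsto (fun n => infDist y (Sn n)) atTop (𝓝 (infDist y Sstar)) := by
    intro y
    rw [Metric.tendsto_nhds]
    intro ε hε
    obtain ⟨z, hzS, hzd⟩ :=
      (hSstar_fin.isCompact).exists_infDist_eq_dist hSstar_ne y
    obtain ⟨i1, hi1, rfl⟩ : ∃ i1 ∈ I, s i1 = z := by
      rw [hSstar] at hzS; exact_mod_cast Finset.mem_image.1 (by exact_mod_cast hzS)
    -- upper bound eventually
    have hup : ∀ᶠ n in atTop, infDist y (Sn n) < infDist y Sstar + ε / 2 := by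
      have hdd : Tendsto (fun n => dist y (g (φ n) i1)) atTop (𝓝 (dist y (s i1))) :=
        tendsto_const_nhds.dist (hs i1 hi1)
      have : dist y (s i1) < infDist y Sstar + ε / 2 := by rw [← hzd]; linarith
      refine (hdd.eventually_lt_const this).mono fun n hn => ?_
      exact lt_of_le_of_lt (infDist_le_dist_of_mem ⟨i1, rfl⟩) hn
    -- lower bound eventually
    have hlow : ∀ᶠ n in atTop, infDist y Sstar - ε / 2 ≤ infDist y (Sn n) := by
      have hco : ∀ i : Fin k, ∀ᶠ n in atTop,
          infDist y Sstar - ε / 2 ≤ dist y (g (φ n) i) := by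
        intro i
        by_cases hi : i ∈ I
        · have hdd : Tendsto (fun n => dist y (g (φ n) i)) atTop (𝓝 (dist y (s i))) :=
            tendsto_const_nhds.dist (hs i hi)
          have hge : infDist y Sstar - ε / 2 < dist y (s i) := by
            have : infDist y Sstar ≤ dist y (s i) :=
              infDist_le_dist_of_mem (by
                rw [hSstar]; exact_mod_cast Finset.mem_image_of_mem s hi)
            linarith
          exact (hdd.eventually_const_lt hge).mono fun n hn => le_of_lt hn
        · have := (hesc i hi).eventually_ge_atTop (dist x0 y + infDist y Sstar)
          refine this.mono fun n hn => ?_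
          have h2 := dist_triangle x0 y (g (φ n) i)
          have : infDist y Sstar ≤ dist y (g (φ n) i) := by linarith
          linarith
      refine (eventually_all.2 hco).mono fun n hn => ?_
      refine le_infDist' (hSnne n) ?_
      rintro z ⟨i, rfl⟩
      exact hn i
    filter_upwards [hup, hlow] with n h1 h2
    rw [Real.dist_eq, abs_sub_lt_iff]
    constructor <;> linarith
  -- Fatou
  have hkey : ∫⁻ y, ENNReal.ofReal (infDist y Sstar ^ p) ∂μ ≤ ENNReal.ofReal m := by
    have hptΦ : ∀ y : X, Tendsto (fun n => Φ n y) atTop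
        (𝓝 (ENNReal.ofReal (infDist y Sstar ^ p))) := by
      intro y
      have hc : ContinuousAt (fun t : ℝ => ENNReal.ofReal (t ^ p)) (infDist y Sstar) :=
        (ENNReal.continuous_ofReal.continuousAt).comp
          (Real.continuousAt_rpow_const _ _ (Or.inr hp0))
      exact hc.tendsto.comp (hptlim y)
    have heq : ∀ y : X, ENNReal.ofReal (infDist y Sstar ^ p)
        = Filter.liminf (fun n => Φ n y) atTop := fun y => ((hptΦ y).liminf_eq).symm
    calc ∫⁻ y, ENNReal.ofReal (infDist y Sstar ^ p) ∂μ
        = ∫⁻ y, Filter.liminf (fun n => Φ n y) atTop ∂μ := by simp only [heq]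
      _ ≤ Filter.liminf (fun n => ∫⁻ y, Φ n y ∂μ) atTop := lintegral_liminf_le hΦmeas
      _ ≤ ENNReal.ofReal m := hlim_bound
  have hWstar : Wp p Sstar μ ≤ m := by
    have heq : Wp p Sstar μ = (∫⁻ y, ENNReal.ofReal (infDist y Sstar ^ p) ∂μ).toReal := by
      rw [Wp]
      exact integral_eq_lintegral_of_nonneg_ae
        (Eventually.of_forall fun y => Real.rpow_nonneg infDist_nonneg p)
        (((continuous_infDist_pt Sstar).rpow_const (fun y => Or.inr hp0)).aestronglyMeasurable)
    rw [heq]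
    exact ENNReal.toReal_le_of_le_ofReal hm0 hkey
  refine ⟨⟨⟨Sstar, hSstar_fin.isCompact⟩, hSstar_ne⟩, hSstar_feas, fun T hT => ?_⟩
  exact le_trans hWstar (hm_le T hT)
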